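/- Let m > n be coprime positive integers and ℓ ≥ 1. In K[u₁,u₂], the polynomials Φ_n(u₁,u₂) = Σ_{i=0}^{n−1} u₁^{ℓ(n−1−i)} u₂^{ℓi} and u₂^{ℓn−1}·Φ_{m−n}(u₁,u₂) are coprime. -/

import Mathlib

open MvPolynomial Finset

/-- `Φ_b(u₁,u₂) = Σ_{i=0}^{b−1} u₁^{ℓ(b−1−i)} u₂^{ℓi}`. -/
noncomputable def Phi (K : Type*) [Field K] (l b : ℕ) : MvPolynomial (Fin 2) K :=
  ∑ i ∈ Finset.range b, X 0 ^ (l * (b - 1 - i)) * X 1 ^ (l * i)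

lemma phi_eq (K : Type*) [Field K] (l b : ℕ) :
    Phi K l b = ∑ i ∈ Finset.range b, (X 0 ^ l) ^ (b - 1 - i) * ((X 1 : MvPolynomial (Fin 2) K) ^ l) ^ i := by
  simp [Phi, ← pow_mul]

lemma mul_phi (K : Type*) [Field K] (l b : ℕ) :
    ((X 0 : MvPolynomial (Fin 2) K) ^ l - X 1 ^ l) * Phi K l b
      = (X 0 ^ l) ^ b - ((X 1 : MvPolynomial (Fin 2) K) ^ l) ^ b := by
  have h := geom_sum₂_mul ((X 1 : MvPolynomial (Fin 2) K) ^ l) (X 0 ^ l) b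
  rw [phi_eq]
  have hrw : (∑ i ∈ Finset.range b, ((X 1 : MvPolynomial (Fin 2) K) ^ l) ^ i * (X 0 ^ l) ^ (b - 1 - i))
      = ∑ i ∈ Finset.range b, (X 0 ^ l) ^ (b - 1 - i) * ((X 1 : MvPolynomial (Fin 2) K) ^ l) ^ i := by
    apply Finset.sum_congr rfl; intros; ring
  rw [hrw] at h
  linear_combination -h

lemma euclid_step {R : Type*} [CommRing R] [IsDomain R] [UniqueFactorizationMonoid R]
    {x y d : R} (hrel : IsRelPrime d y) {a b : ℕ} (hab : a ≤ b)
    (ha : d ∣ x ^ a - y ^ a) (hb : d ∣ x ^ b - y ^ b) :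
    d ∣ x ^ (b - a) - y ^ (b - a) := by
  obtain ⟨c, rfl⟩ : ∃ c, c + a = b := ⟨b - a, by omega⟩
  have hkey : y ^ a * (x ^ c - y ^ c) = (x ^ (c + a) - y ^ (c + a)) - x ^ c * (x ^ a - y ^ a) := by
    rw [pow_add, pow_add]; ring
  have : d ∣ y ^ a * (x ^ c - y ^ c) := by
    rw [hkey]; exact dvd_sub hb (Dvd.dvd.mul_left ha _)
  have := (hrel.pow_right (n := a)).dvd_of_dvd_mul_left this
  simpa [Nat.add_sub_cancel] using this

lemma euclid {R : Type*} [CommRing R] [IsDomain R] [UniqueFactorizationMonoid R]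
    {x y d : R} (hrel : IsRelPrime d y) :
    ∀ N a b : ℕ, a + b ≤ N → d ∣ x ^ a - y ^ a → d ∣ x ^ b - y ^ b →
      d ∣ x ^ (Nat.gcd a b) - y ^ (Nat.gcd a b) := by
  intro N
  induction N with
  | zero =>
    intro a b hab ha hb
    obtain ⟨rfl, rfl⟩ : a = 0 ∧ b = 0 := by omega
    simpa using ha
  | succ N ih =>
    intro a b hab ha hb
    rcases Nat.eq_zero_or_pos a with rfl | hapos
    · simpa [Nat.gcd] using hb
    rcases Nat.eq_zero_or_pos b with rfl | hbpos
    · simpa [Nat.gcd_zero_right] using ha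
    rcases le_or_gt a b with hle | hlt
    · have hstep := euclid_step hrel hle ha hb
      have := ih a (b - a) (by omega) ha hstep
      rwa [Nat.gcd_sub_self_right hle] at this
    · have hstep := euclid_step hrel hlt.le hb ha
      have := ih (a - b) b (by omega) hstep hb
      rwa [Nat.gcd_sub_self_left hlt.le] at this

lemma prime_X1 (K : Type*) [Field K] : Prime (X 1 : MvPolynomial (Fin 2) K) := by
  let e := (MvPolynomial.renameEquiv K (Equiv.swap (0 : Fin 2) 1)).trans
      (MvPolynomial.finSuccEquiv K 1)
  have he : e (X 1) = Polynomial.X := by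
    simp [e, MvPolynomial.renameEquiv_apply, MvPolynomial.rename_X,
      MvPolynomial.finSuccEquiv_X_zero]
  rw [← MulEquiv.prime_iff e.toMulEquiv]
  show Prime (e (X 1))
  rw [he]
  exact Polynomial.prime_X

lemma phi_congr (K : Type*) [Field K] (l b : ℕ) :
    ((X 0 : MvPolynomial (Fin 2) K) ^ l - X 1 ^ l) ∣
      Phi K l b - (b : MvPolynomial (Fin 2) K) * X 1 ^ (l * (b - 1)) := by
  have hb' : (b : MvPolynomial (Fin 2) K) * X 1 ^ (l * (b - 1))
      = ∑ _i ∈ Finset.range b, ((X 1 : MvPolynomial (Fin 2) K) ^ l) ^ (b - 1) := by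
    simp [Finset.sum_const, pow_mul, nsmul_eq_mul]
  rw [phi_eq, hb', ← Finset.sum_sub_distrib]
  apply Finset.dvd_sum
  intro i hi
  have hi' : i < b := Finset.mem_range.mp hi
  have : ((X 1 : MvPolynomial (Fin 2) K) ^ l) ^ (b - 1)
      = ((X 1 : MvPolynomial (Fin 2) K) ^ l) ^ (b - 1 - i) * ((X 1 : MvPolynomial (Fin 2) K) ^ l) ^ i := by
    rw [← pow_add]; congr 1; omega
  rw [this, ← sub_mul]
  exact Dvd.dvd.mul_right (sub_dvd_pow_sub_pow _ _ _) _

/-- For coprime positive integers `m > n` and `ℓ ≥ 1`, the polynomials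
`Φ_n` and `u₂^{ℓn−1} Φ_{m−n}` are coprime in `K[u₁,u₂]`
(every common divisor is a unit). -/
theorem stmt_12 (K : Type*) [Field K] (l m n : ℕ)
    (hl : 0 < l) (hn : 0 < n) (hmn : n < m) (hcop : Nat.Coprime m n) :
    ∀ d : MvPolynomial (Fin 2) K,
      d ∣ Phi K l n → d ∣ X 1 ^ (l * n - 1) * Phi K l (m - n) → IsUnit d := by
  intro d hd1 hd2
  -- the substitution u₂ ↦ 0
  let φ : MvPolynomial (Fin 2) K →ₐ[K] MvPolynomial (Fin 2) K :=
    aeval (fun i => if i = 0 then X 0 else 0)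
  have hφ : φ (Phi K l n) = X 0 ^ (l * (n - 1)) := by
    rw [Phi, map_sum]
    rw [Finset.sum_eq_single 0]
    · simp [φ]
    · intro i hi hi0
      have : 0 < l * i := Nat.mul_pos hl (Nat.pos_of_ne_zero hi0)
      simp only [φ, aeval_X, if_neg (by simp : ¬(1:Fin 2) = 0), map_mul, map_pow, aeval_X]
      rw [zero_pow (by omega : l * i ≠ 0), mul_zero]
    · intro h; exact absurd (Finset.mem_range.mpr hn) h
  have hX1prime := prime_X1 K
  have hX1d : ¬ (X 1 : MvPolynomial (Fin 2) K) ∣ d := by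
    intro h
    have hdvd : (X 1 : MvPolynomial (Fin 2) K) ∣ Phi K l n := h.trans hd1
    obtain ⟨c, hc⟩ := hdvd
    have : (X 0 : MvPolynomial (Fin 2) K) ^ (l * (n - 1)) = 0 := by
      rw [← hφ, hc, map_mul]
      simp [φ]
    exact pow_ne_zero _ (MvPolynomial.X_ne_zero 0) this
  have hrel : IsRelPrime d (X 1 : MvPolynomial (Fin 2) K) := by
    intro e hed hex
    obtain ⟨c, hc⟩ := hex
    rcases hX1prime.irreducible.isUnit_or_isUnit hc with h | h
    · exact h
    · exfalso
      apply hX1d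
      exact dvd_trans ⟨↑h.unit⁻¹, by rw [hc, mul_assoc, IsUnit.mul_val_inv, mul_one]⟩ hed
  -- d divides Phi (m-n)
  have hd2' : d ∣ Phi K l (m - n) :=
    (hrel.pow_right).dvd_of_dvd_mul_left hd2
  -- d divides the power differences
  have hA : d ∣ ((X 0 : MvPolynomial (Fin 2) K) ^ l) ^ n - ((X 1 : MvPolynomial (Fin 2) K) ^ l) ^ n := by
    rw [← mul_phi]; exact Dvd.dvd.mul_left hd1 _
  have hB : d ∣ ((X 0 : MvPolynomial (Fin 2) K) ^ l) ^ (m - n) - ((X 1 : MvPolynomial (Fin 2) K) ^ l) ^ (m - n) := by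
    rw [← mul_phi]; exact Dvd.dvd.mul_left hd2' _
  have hgcd : Nat.gcd n (m - n) = 1 := by
    rw [Nat.gcd_sub_self_right hmn.le, Nat.gcd_comm]
    exact hcop
  have hC : d ∣ (X 0 : MvPolynomial (Fin 2) K) ^ l - (X 1 : MvPolynomial (Fin 2) K) ^ l := by
    have := euclid hrel.pow_right (n + (m - n)) n (m - n) le_rfl hA hB
    rwa [hgcd, pow_one, pow_one] at this
  -- d divides b • X1^(l(b-1)) for b = n and b = m - n
  have key : ∀ b : ℕ, d ∣ Phi K l b → d ∣ (b : MvPolynomial (Fin 2) K) * X 1 ^ (l * (b - 1)) := by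
    intro b hdb
    have h1 : d ∣ Phi K l b - (b : MvPolynomial (Fin 2) K) * X 1 ^ (l * (b - 1)) :=
      dvd_trans hC (phi_congr K l b)
    have := dvd_sub hdb h1
    simpa using this
  have main : ∀ b : ℕ, (b : K) ≠ 0 → d ∣ Phi K l b → IsUnit d := by
    intro b hbK hdb
    have h1 := key b hdb
    have hu : IsUnit ((b : MvPolynomial (Fin 2) K)) := by
      have : IsUnit (C (b : K) : MvPolynomial (Fin 2) K) := (isUnit_iff_ne_zero.mpr hbK).map C
      rwa [map_natCast] at this
    have h2 : d ∣ (X 1 : MvPolynomial (Fin 2) K) ^ (l * (b - 1)) := by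
      obtain ⟨u, hu'⟩ := hu
      rw [← hu'] at h1
      exact (Units.dvd_mul_left).mp h1
    exact (hrel.pow_right) dvd_rfl h2
  by_cases hnK : (n : K) ≠ 0
  · exact main n hnK hd1
  · push_neg at hnK
    have hmnK : ((m - n : ℕ) : K) ≠ 0 := by
      intro h
      have hchar := ringChar.charP K
      have h1 : ringChar K ∣ n := (CharP.cast_eq_zero_iff K (ringChar K) n).mp hnK
      have h2 : ringChar K ∣ m - n := (CharP.cast_eq_zero_iff K (ringChar K) (m - n)).mp h
      have h3 : ringChar K ∣ m := by
        have : m = (m - n) + n := by omega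
        rw [this]; exact Nat.dvd_add h2 h1
      have : ringChar K ∣ 1 := hcop ▸ Nat.dvd_gcd h3 h1
      have := Nat.eq_one_of_dvd_one this
      exact CharP.char_ne_one K (ringChar K) this
    exact main (m - n) hmnK hd2'
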